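/- If q is an s–t path with c(q) < c(p̃_{s,v,t}) for some vertex v, then every vertex u lying on q belongs to a maximal reciprocal pointer chain whose associated cascading via-path has cost strictly less than c(p̃_{s,v,t}). -/

import Mathlib

variable {V : Type*}

/-- `p` is a path from `u` to `w` in the digraph with edge relation `E`:
a nonempty finite sequence of vertices beginning at `u` and ending at `w`
in which every consecutive pair of vertices is an edge. -/
def IsPath (E : V → V → Prop) (p : List V) (u w : V) : Prop :=
  p ≠ [] ∧ p.head? = some u ∧ p.getLast? = some w ∧ p.Chain' E

/-- The cost of a path: the sum of the weights of its edges. -/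
def pathCost (c : V → V → ℝ) (p : List V) : ℝ :=
  ((p.zip p.tail).map fun e => c e.1 e.2).sum

/-- A shortest path from `u` to `w`: a path from `u` to `w` of minimum cost. -/
def IsShortestPath (E : V → V → Prop) (c : V → V → ℝ) (p : List V) (u w : V) : Prop :=
  IsPath E p u w ∧ ∀ q, IsPath E q u w → pathCost c p ≤ pathCost c q

/-- A via-path for `v`: an `s`–`t` path of minimum cost among all `s`–`t`
paths passing through `v`. -/
def IsViaPath (E : V → V → Prop) (c : V → V → ℝ) (s t v : V) (p : List V) : Prop :=
  IsPath E p s t ∧ v ∈ p ∧ ∀ q, IsPath E q s t → v ∈ q → pathCost c p ≤ pathCost c q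

/-- The minimum cost of an `s`–`t` path passing through `v`. -/
noncomputable def viaCost (E : V → V → Prop) (c : V → V → ℝ) (s t v : V) : ℝ :=
  sInf (pathCost c '' {p | IsPath E p s t ∧ v ∈ p})

/-- A predecessor shortest path tree rooted at the source `s`: a map `b`
assigning to each vertex `v ≠ s` a vertex `b v` with an edge from `b v` to `v`,
such that iterating `b` from any `v` terminates at `s` and the resulting path
`pathTo v` (read from `s` to `v`) is a shortest path from `s` to `v`. -/
structure PredSPT (E : V → V → Prop) (c : V → V → ℝ) (s : V) where
  b : V → V
  pathTo : V → List V
  edge : ∀ v, v ≠ s → E (b v) v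
  pathTo_src : pathTo s = [s]
  pathTo_step : ∀ v, v ≠ s → pathTo v = pathTo (b v) ++ [v]
  shortest : ∀ v, IsShortestPath E c (pathTo v) s v

/-- A successor shortest path tree rooted at the target `t`: a map `f`
assigning to each vertex `v ≠ t` a vertex `f v` with an edge from `v` to `f v`,
such that iterating `f` from any `v` terminates at `t` and the resulting path
`pathFrom v` is a shortest path from `v` to `t`. -/
structure SuccSPT (E : V → V → Prop) (c : V → V → ℝ) (t : V) where
  f : V → V
  pathFrom : V → List V
  edge : ∀ v, v ≠ t → E v (f v)
  pathFrom_tgt : pathFrom t = [t]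
  pathFrom_step : ∀ v, v ≠ t → pathFrom v = v :: pathFrom (f v)
  shortest : ∀ v, IsShortestPath E c (pathFrom v) v t

variable {E : V → V → Prop} {c : V → V → ℝ} {s t : V}

/-- The cascading via-path (CVP) of a vertex `v`: the tree path `p̃_{s,v}`
followed by the tree path `p̃_{v,t}`. -/
def CVP (B : PredSPT E c s) (F : SuccSPT E c t) (v : V) : List V :=
  B.pathTo v ++ (F.pathFrom v).tail

/-- A reciprocal pointer chain (RPC): a nonempty sequence of vertices
`(v_1, …, v_n)` such that for all `1 ≤ i < n`, `b (v_{i+1}) = v_i` and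
`f (v_i) = v_{i+1}` (as pointers of the two shortest path trees, so in
particular `v_{i+1} ≠ s` and `v_i ≠ t`). -/
def IsRPC (B : PredSPT E c s) (F : SuccSPT E c t) (r : List V) : Prop :=
  r ≠ [] ∧ r.Chain' fun x y => y ≠ s ∧ x ≠ t ∧ B.b y = x ∧ F.f x = y

/-- A maximal RPC: an RPC whose set of vertices is not a (strict) subset of the
vertex set of any other RPC. -/
def IsMaximalRPC [DecidableEq V] (B : PredSPT E c s) (F : SuccSPT E c t)
    (r : List V) : Prop :=
  IsRPC B F r ∧
    ∀ r', IsRPC B F r' → r.toFinset ⊆ r'.toFinset → r'.toFinset = r.toFinset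

/-- The Jaccard distance between the vertex sets of two paths. -/
noncomputable def jaccardDist [DecidableEq V] (p q : List V) : ℝ :=
  1 - ((p.toFinset ∩ q.toFinset).card : ℝ) / ((p.toFinset ∪ q.toFinset).card : ℝ)

/-- A plateau: a nonempty sequence of vertices in which every consecutive pair
is an edge and all vertices have the same minimum via-path cost. -/
def IsPlateau (E : V → V → Prop) (c : V → V → ℝ) (s t : V) (q : List V) : Prop :=
  q ≠ [] ∧ q.Chain' fun x y => E x y ∧ viaCost E c s t x = viaCost E c s t y

/-- A maximal plateau: a plateau whose set of vertices is not a (strict) subset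
of the vertex set of any other plateau. -/
def IsMaximalPlateau [DecidableEq V] (E : V → V → Prop) (c : V → V → ℝ)
    (s t : V) (q : List V) : Prop :=
  IsPlateau E c s t q ∧
    ∀ q', IsPlateau E c s t q' → q.toFinset ⊆ q'.toFinset → q'.toFinset = q.toFinset

section AuxLemmas

variable {E : V → V → Prop} {c : V → V → ℝ} {s t : V}

lemma pathCost_singleton (x : V) : pathCost c [x] = 0 := by simp [pathCost]

lemma pathCost_cons_cons (x y : V) (l : List V) :
    pathCost c (x :: y :: l) = c x y + pathCost c (y :: l) := by
  simp [pathCost]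

lemma pathCost_append_cons (a : List V) (m : V) (l : List V) :
    pathCost c (a ++ m :: l) = pathCost c (a ++ [m]) + pathCost c (m :: l) := by
  induction a with
  | nil => simp [pathCost_singleton]
  | cons x a ih =>
    cases a with
    | nil => simp [pathCost_cons_cons, pathCost_singleton]
    | cons y a' =>
      rw [show (x :: y :: a') ++ m :: l = x :: (y :: (a' ++ m :: l)) by simp,
        pathCost_cons_cons,
        show (x :: y :: a') ++ [m] = x :: (y :: (a' ++ [m])) by simp,
        pathCost_cons_cons]
      rw [show (y :: a') ++ m :: l = y :: (a' ++ m :: l) by simp,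
        show (y :: a') ++ [m] = y :: (a' ++ [m]) by simp] at ih
      rw [ih]; ring

lemma pathFrom_head (F : SuccSPT E c t) (u : V) :
    F.pathFrom u = u :: (F.pathFrom u).tail := by
  obtain ⟨⟨hne, hhead, -, -⟩, -⟩ := F.shortest u
  cases h : F.pathFrom u with
  | nil => exact absurd h hne
  | cons a l => rw [h] at hhead; simp_all

lemma pathTo_last_eq (B : PredSPT E c s) (u : V) :
    (B.pathTo u).dropLast ++ [u] = B.pathTo u := by
  obtain ⟨⟨hne, -, hlast, -⟩, -⟩ := B.shortest u
  exact List.dropLast_append_getLast? u hlast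

lemma pathCost_CVP (B : PredSPT E c s) (F : SuccSPT E c t) (u : V) :
    pathCost c (CVP B F u) =
      pathCost c (B.pathTo u) + pathCost c (F.pathFrom u) := by
  unfold CVP
  conv_lhs => rw [← pathTo_last_eq B u]
  rw [show (B.pathTo u).dropLast ++ [u] ++ (F.pathFrom u).tail
      = (B.pathTo u).dropLast ++ u :: (F.pathFrom u).tail by simp,
    pathCost_append_cons, ← pathFrom_head, pathTo_last_eq]

lemma cvp_step (B : PredSPT E c s) (F : SuccSPT E c t) {x y : V}
    (hy : y ≠ s) (hx : x ≠ t) (hb : B.b y = x) (hf : F.f x = y) :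
    CVP B F x = CVP B F y := by
  unfold CVP
  have h1 : F.pathFrom x = x :: F.pathFrom y := by
    rw [F.pathFrom_step x hx, hf]
  have h2 : B.pathTo y = B.pathTo x ++ [y] := by
    rw [B.pathTo_step y hy, hb]
  have h3 := pathFrom_head F y
  rw [h1, h2, List.tail_cons]
  conv_lhs => rw [h3]
  simp

lemma rpc_cvp_const (B : PredSPT E c s) (F : SuccSPT E c t) (r : List V)
    (hr : IsRPC B F r) :
    ∀ x ∈ r, ∀ y ∈ r, CVP B F x = CVP B F y := by
  obtain ⟨-, hchain⟩ := hr
  have key : ∀ (l : List V),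
      (l.Chain' fun x y => y ≠ s ∧ x ≠ t ∧ B.b y = x ∧ F.f x = y) →
      ∀ a, a ∈ l.head? → ∀ x ∈ l, CVP B F x = CVP B F a := by
    intro l
    induction l with
    | nil => intro _ a ha; simp at ha
    | cons b l ih =>
      intro hch a ha x hx
      simp only [List.head?_cons, Option.mem_def, Option.some_inj] at ha
      subst ha
      rcases List.mem_cons.1 hx with rfl | hx
      · rfl
      · cases l with
        | nil => simp at hx
        | cons d l' =>
          rw [List.Chain', List.isChain_cons_cons] at hch
          obtain ⟨⟨h1, h2, h3, h4⟩, hch'⟩ := hch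
          have := ih hch' d (by simp) x (by simpa using hx)
          rw [this, cvp_step B F h1 h2 h3 h4]
  intro x hx y hy
  cases r with
  | nil => simp at hx
  | cons b l =>
    rw [key _ hchain b (by simp) x hx, key _ hchain b (by simp) y hy]

lemma exists_maximal_rpc [Fintype V] [DecidableEq V]
    (B : PredSPT E c s) (F : SuccSPT E c t) (u : V) :
    ∃ r, IsMaximalRPC B F r ∧ u ∈ r := by
  classical
  set C : Set ℕ := {n | ∃ r, IsRPC B F r ∧ u ∈ r ∧ r.toFinset.card = n} with hC
  have hne : C.Nonempty := ⟨1, [u], ⟨by simp, List.isChain_singleton _⟩, by simp, by simp⟩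
  have hbdd : BddAbove C := by
    refine ⟨Fintype.card V, ?_⟩
    rintro n ⟨r, -, -, rfl⟩
    exact Finset.card_le_univ _
  obtain ⟨r, hr, hur, hcard⟩ := Nat.sSup_mem hne hbdd
  refine ⟨r, ⟨hr, ?_⟩, hur⟩
  intro r' hr' hsub
  have hur' : u ∈ r' := List.mem_toFinset.1 (hsub (List.mem_toFinset.2 hur))
  have hle : r'.toFinset.card ≤ sSup C :=
    le_csSup hbdd ⟨r', hr', hur', rfl⟩
  exact (Finset.eq_of_subset_of_card_le hsub (hcard ▸ hle)).symm

lemma split_path_at {q : List V} {u : V} (hq : IsPath E q s t) (hu : u ∈ q) :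
    ∃ q1 q2, q = q1 ++ u :: q2 ∧ IsPath E (q1 ++ [u]) s u ∧ IsPath E (u :: q2) u t := by
  obtain ⟨q1, q2, rfl⟩ := List.append_of_mem hu
  obtain ⟨hne, hhead, hlast, hchain⟩ := hq
  obtain ⟨c1, c2, hrel⟩ := List.isChain_append.1 hchain
  have hchain1 : (q1 ++ [u]).Chain' E := by
    refine List.isChain_append.2 ⟨c1, by simp, ?_⟩
    intro x hx y hy
    simp only [List.head?_cons, Option.mem_def, Option.some_inj] at hy
    subst hy
    exact hrel x hx u (by simp)
  refine ⟨q1, q2, rfl, ⟨by simp, ?_, by simp, hchain1⟩, ⟨by simp, by simp, ?_, c2⟩⟩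
  · rw [show q1 ++ u :: q2 = (q1 ++ [u]) ++ q2 by simp] at hhead
    rwa [List.head?_append_of_ne_nil _ (by simp)] at hhead
  · rw [List.getLast?_append, Option.or_eq_some_iff] at hlast
    rcases hlast with h | ⟨h, h'⟩
    · exact h
    · exact absurd h (by simp)

lemma cvp_le_of_mem_path (B : PredSPT E c s) (F : SuccSPT E c t)
    {q : List V} {u : V} (hq : IsPath E q s t) (hu : u ∈ q) :
    pathCost c (CVP B F u) ≤ pathCost c q := by
  obtain ⟨q1, q2, rfl, h1, h2⟩ := split_path_at hq hu
  rw [pathCost_CVP, pathCost_append_cons]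
  exact add_le_add ((B.shortest u).2 _ h1) ((F.shortest u).2 _ h2)

end AuxLemmas

/-- If `q` is an `s`–`t` path with `c(q) < c(p̃_{s,v,t})`, then
every vertex `u` on `q` belongs to a maximal RPC whose associated CVP (the
common CVP of its member vertices) has cost strictly less than `c(p̃_{s,v,t})`. -/
theorem shorter_paths_use_shorter_rpc_nodes [Fintype V] [DecidableEq V]
    {E : V → V → Prop} {c : V → V → ℝ} {s t : V}
    (hc : ∀ u w, E u w → 0 ≤ c u w)
    (B : PredSPT E c s) (F : SuccSPT E c t)
    (v : V) (q : List V) (hq : IsPath E q s t)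
    (hlt : pathCost c q < pathCost c (CVP B F v)) :
    ∀ u ∈ q, ∃ r, IsMaximalRPC B F r ∧ u ∈ r ∧
      ∀ w ∈ r, pathCost c (CVP B F w) < pathCost c (CVP B F v) := by
  intro u hu
  obtain ⟨r, hrmax, hur⟩ := exists_maximal_rpc B F u
  refine ⟨r, hrmax, hur, fun w hw => ?_⟩
  have hconst := rpc_cvp_const B F r hrmax.1 w hw u hur
  rw [hconst]
  exact lt_of_le_of_lt (cvp_le_of_mem_path B F hq hu) hlt
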